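/- Let q ∈ ℂ with q ≠ 0 and q² ≠ 1, set ω = q − q⁻¹, let m ≥ 1 and let μ₁, …, μ_m ∈ ℂ be pairwise distinct. Define p_n(μ) = Σ_{i=1}^{m} μ_iⁿ d_i(μ) and t_n(μ) = Σ_{i=1}^{m} (q⁻² μ_i)ⁿ d̃_i(μ). Then for every n ≥ 1: p_n(μ) = t_n(μ) + ω Σ_{k=1}^{n−1} p_{n−k}(μ) · t_k(μ). -/

import Mathlib

open Finset

section Aux

open Polynomial

lemma interp_poly (m : ℕ) (ν : Fin m → ℂ) (hν : Function.Injective ν) (c : ℂ) :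
    (∏ j, (X - C (c * ν j)) : ℂ[X]) =
      (∏ j, (X - C (ν j))) +
      ∑ i, C ((1 - c) * ν i * ∏ j ∈ univ.erase i, (ν i - c * ν j) / (ν i - ν j)) *
        ∏ j ∈ univ.erase i, (X - C (ν j)) := by
  rcases Nat.eq_zero_or_pos m with hm | hm
  · subst hm; simp
  have hmonic1 : ((∏ j, (X - C (c * ν j))) : ℂ[X]).Monic :=
    monic_prod_of_monic _ _ fun i _ => monic_X_sub_C _
  have hmonic2 : ((∏ j, (X - C (ν j))) : ℂ[X]).Monic :=
    monic_prod_of_monic _ _ fun i _ => monic_X_sub_C _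
  have hdeg1 : ((∏ j, (X - C (c * ν j))) : ℂ[X]).degree = (m : WithBot ℕ) := by
    rw [degree_eq_natDegree hmonic1.ne_zero,
      natDegree_prod_of_monic _ _ fun i _ => monic_X_sub_C _]
    simp only [natDegree_X_sub_C, sum_const, card_univ, Fintype.card_fin, smul_eq_mul, mul_one]
  have hdeg2 : ((∏ j, (X - C (ν j))) : ℂ[X]).degree = (m : WithBot ℕ) := by
    rw [degree_eq_natDegree hmonic2.ne_zero,
      natDegree_prod_of_monic _ _ fun i _ => monic_X_sub_C _]
    simp only [natDegree_X_sub_C, sum_const, card_univ, Fintype.card_fin, smul_eq_mul, mul_one]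
  apply eq_of_degree_sub_lt_of_eval_index_eq (univ : Finset (Fin m))
    (Set.injOn_of_injective hν)
  · -- degree bound
    have hA : (((∏ j, (X - C (c * ν j))) - ∏ j, (X - C (ν j))) : ℂ[X]).degree
        < (m : WithBot ℕ) := by
      have := degree_sub_lt (hdeg1.trans hdeg2.symm) hmonic1.ne_zero
        (hmonic1.leadingCoeff.trans hmonic2.leadingCoeff.symm)
      rwa [hdeg1] at this
    have hS : ((∑ i, C ((1 - c) * ν i * ∏ j ∈ univ.erase i, (ν i - c * ν j) / (ν i - ν j)) *
        ∏ j ∈ univ.erase i, (X - C (ν j))) : ℂ[X]).degree < (m : WithBot ℕ) := by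
      refine lt_of_le_of_lt (degree_sum_le _ _) ?_
      rw [Finset.sup_lt_iff (by exact WithBot.bot_lt_coe m)]
      intro i _
      refine lt_of_le_of_lt (degree_mul_le _ _) ?_
      have h1 : ((∏ j ∈ univ.erase i, (X - C (ν j))) : ℂ[X]).degree
          = ((m - 1 : ℕ) : WithBot ℕ) := by
        have hmo : ((∏ j ∈ univ.erase i, (X - C (ν j))) : ℂ[X]).Monic :=
          monic_prod_of_monic _ _ fun i _ => monic_X_sub_C _
        rw [degree_eq_natDegree hmo.ne_zero,
          natDegree_prod_of_monic _ _ fun i _ => monic_X_sub_C _]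
        simp only [natDegree_X_sub_C, sum_const, smul_eq_mul, mul_one,
          card_erase_of_mem (mem_univ i), card_univ, Fintype.card_fin]
      calc degree (C ((1 - c) * ν i * ∏ j ∈ univ.erase i, (ν i - c * ν j) / (ν i - ν j)))
            + ((∏ j ∈ univ.erase i, (X - C (ν j))) : ℂ[X]).degree
          ≤ 0 + ((m - 1 : ℕ) : WithBot ℕ) := by
            exact add_le_add (degree_C_le) (le_of_eq h1)
        _ = ((m - 1 : ℕ) : WithBot ℕ) := by rw [zero_add]
        _ < (m : WithBot ℕ) := by exact_mod_cast Nat.sub_lt hm one_pos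
    rw [sub_add_eq_sub_sub]
    refine lt_of_le_of_lt (degree_sub_le _ _) ?_
    have hcard : ((#(univ : Finset (Fin m)) : ℕ) : WithBot ℕ) = (m : WithBot ℕ) := by simp
    rw [hcard]
    exact max_lt hA hS
  · -- evaluations agree
    intro i _
    have hzero : eval (ν i) ((∏ j, (X - C (ν j))) : ℂ[X]) = 0 := by
      rw [eval_prod]
      exact Finset.prod_eq_zero (mem_univ i) (by simp)
    rw [eval_add, hzero, zero_add, eval_finset_sum]
    rw [Finset.sum_eq_single i]
    · have hne : ∀ j ∈ univ.erase i, ν i - ν j ≠ 0 := by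
        intro j hj h
        exact (mem_erase.mp hj).1 (hν (sub_eq_zero.mp h)).symm
      simp only [eval_mul, eval_C, eval_prod, eval_sub, eval_X]
      rw [Finset.prod_div_distrib, mul_assoc, div_mul_cancel₀ _ (Finset.prod_ne_zero_iff.mpr hne),
        ← Finset.mul_prod_erase univ (fun j => ν i - c * ν j) (mem_univ i)]
      ring
    · intro k _ hk
      have : eval (ν i) ((∏ j ∈ univ.erase k, (X - C (ν j))) : ℂ[X]) = 0 := by
        rw [eval_prod]
        exact Finset.prod_eq_zero (mem_erase.mpr ⟨fun h => hk h.symm, mem_univ i⟩) (by simp)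
      simp [this]
    · intro h; exact absurd (mem_univ i) h

lemma mirror_poly (m : ℕ) (ν : Fin m → ℂ) (hν : Function.Injective ν) (c : ℂ) :
    (∏ j, (1 - C (c * ν j) * X) : ℂ[X]) =
      (∏ j, (1 - C (ν j) * X)) +
      ∑ i, C ((1 - c) * ν i * ∏ j ∈ univ.erase i, (ν i - c * ν j) / (ν i - ν j)) * X *
        ∏ j ∈ univ.erase i, (1 - C (ν j) * X) := by
  apply eq_of_infinite_eval_eq
  apply Set.Infinite.mono (s := {x : ℂ | x ≠ 0})
  swap
  · exact Set.Finite.infinite_compl (Set.finite_singleton 0)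
  intro x hx
  have hx : x ≠ 0 := hx
  have key := congrArg (eval x⁻¹) (interp_poly m ν hν c)
  simp only [eval_add, eval_prod, eval_finset_sum, eval_mul, eval_sub, eval_X, eval_C] at key
  have hmul := congrArg (fun z => x ^ m * z) key
  show eval x _ = eval x _
  simp only [eval_add, eval_prod, eval_finset_sum, eval_mul, eval_sub, eval_X, eval_C, eval_one]
  have hfac : ∀ a : ℂ, 1 - a * x = x * (x⁻¹ - a) := by
    intro a
    field_simp
  calc ∏ j, (1 - c * ν j * x)
      = ∏ j, (x * (x⁻¹ - c * ν j)) := by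
        refine Finset.prod_congr rfl fun j _ => ?_
        rw [hfac]
    _ = x ^ m * ∏ j, (x⁻¹ - c * ν j) := by
        rw [Finset.prod_mul_distrib, prod_const, card_univ, Fintype.card_fin]
    _ = x ^ m * (∏ j, (x⁻¹ - ν j) +
        ∑ i, (1 - c) * ν i * (∏ j ∈ univ.erase i, (ν i - c * ν j) / (ν i - ν j)) *
          ∏ j ∈ univ.erase i, (x⁻¹ - ν j)) := by rw [key]
    _ = ∏ j, (1 - ν j * x) +
        ∑ i, (1 - c) * ν i * (∏ j ∈ univ.erase i, (ν i - c * ν j) / (ν i - ν j)) * x *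
          ∏ j ∈ univ.erase i, (1 - ν j * x) := by
        rw [mul_add]
        congr 1
        · calc x ^ m * ∏ j, (x⁻¹ - ν j)
              = ∏ j, (x * (x⁻¹ - ν j)) := by
                rw [Finset.prod_mul_distrib, prod_const, card_univ, Fintype.card_fin]
            _ = ∏ j, (1 - ν j * x) := Finset.prod_congr rfl fun j _ => (hfac _).symm
        · rw [Finset.mul_sum]
          refine Finset.sum_congr rfl fun i _ => ?_
          have hcard : #(univ.erase i) = m - 1 := by
            rw [card_erase_of_mem (mem_univ i), card_univ, Fintype.card_fin]
          have hxm : x ^ m = x * x ^ (m - 1) := by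
            rw [← pow_succ', Nat.sub_add_cancel (Nat.one_le_iff_ne_zero.mpr
              (Nat.pos_iff_ne_zero.mp i.pos))]
          calc x ^ m * ((1 - c) * ν i * (∏ j ∈ univ.erase i, (ν i - c * ν j) / (ν i - ν j)) *
              ∏ j ∈ univ.erase i, (x⁻¹ - ν j))
              = (1 - c) * ν i * (∏ j ∈ univ.erase i, (ν i - c * ν j) / (ν i - ν j)) * x *
                (x ^ (m - 1) * ∏ j ∈ univ.erase i, (x⁻¹ - ν j)) := by rw [hxm]; ring
            _ = (1 - c) * ν i * (∏ j ∈ univ.erase i, (ν i - c * ν j) / (ν i - ν j)) * x *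
                ∏ j ∈ univ.erase i, (1 - ν j * x) := by
                congr 1
                rw [← hcard, ← prod_const, ← Finset.prod_mul_distrib]
                refine Finset.prod_congr rfl fun j _ => (hfac _).symm

lemma mirror_ps (m : ℕ) (ν : Fin m → ℂ) (hν : Function.Injective ν) (c : ℂ) :
    (∏ j, (1 - PowerSeries.C (c * ν j) * PowerSeries.X)) =
      (∏ j, (1 - PowerSeries.C (ν j) * PowerSeries.X)) +
      ∑ i, PowerSeries.C ((1 - c) * ν i *
          ∏ j ∈ univ.erase i, (ν i - c * ν j) / (ν i - ν j)) * PowerSeries.X *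
        ∏ j ∈ univ.erase i, (1 - PowerSeries.C (ν j) * PowerSeries.X) := by
  have h := congrArg (Polynomial.coeToPowerSeries.ringHom (R := ℂ)) (mirror_poly m ν hν c)
  simpa only [map_prod, map_add, map_sum, map_mul, map_sub, map_one,
    Polynomial.coeToPowerSeries.ringHom_apply, Polynomial.coe_C, Polynomial.coe_X] using h

lemma geom_inv (a : ℂ) :
    (1 - PowerSeries.C a * PowerSeries.X) * PowerSeries.mk (fun n => a ^ n) = 1 := by
  ext n
  cases n with
  | zero => simp
  | succ n =>
    rw [sub_mul, one_mul, mul_assoc]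
    simp only [map_sub, PowerSeries.coeff_C_mul, PowerSeries.coeff_succ_X_mul,
      PowerSeries.coeff_mk, PowerSeries.coeff_one, Nat.succ_ne_zero, if_false]
    ring

lemma prod_geom_inv (m : ℕ) (ν : Fin m → ℂ) :
    (∏ j, (1 - PowerSeries.C (ν j) * PowerSeries.X)) *
      (∏ j, PowerSeries.mk (fun n => ν j ^ n)) = 1 := by
  rw [← Finset.prod_mul_distrib]
  rw [Finset.prod_congr rfl fun j _ => geom_inv (ν j)]
  exact Finset.prod_const_one

lemma prod_form (m : ℕ) (ν : Fin m → ℂ) (hν : Function.Injective ν) (c : ℂ) :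
    (∏ j, (1 - PowerSeries.C (c * ν j) * PowerSeries.X)) *
      (∏ j, PowerSeries.mk (fun n => ν j ^ n)) =
    1 + ∑ i, PowerSeries.C ((1 - c) * ν i *
        ∏ j ∈ univ.erase i, (ν i - c * ν j) / (ν i - ν j)) * PowerSeries.X *
      PowerSeries.mk (fun n => ν i ^ n) := by
  rw [mirror_ps m ν hν c, add_mul, sum_mul, prod_geom_inv]
  congr 1
  refine Finset.sum_congr rfl fun i _ => ?_
  calc (PowerSeries.C ((1 - c) * ν i *
        ∏ j ∈ univ.erase i, (ν i - c * ν j) / (ν i - ν j)) * PowerSeries.X *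
        ∏ j ∈ univ.erase i, (1 - PowerSeries.C (ν j) * PowerSeries.X)) *
        ∏ j, PowerSeries.mk (fun n => ν j ^ n)
      = PowerSeries.C ((1 - c) * ν i *
        ∏ j ∈ univ.erase i, (ν i - c * ν j) / (ν i - ν j)) * PowerSeries.X *
        (PowerSeries.mk (fun n => ν i ^ n) *
          ((∏ j ∈ univ.erase i, (1 - PowerSeries.C (ν j) * PowerSeries.X)) *
            ∏ j ∈ univ.erase i, PowerSeries.mk (fun n => ν j ^ n))) := by
        rw [← Finset.mul_prod_erase univ
          (fun j => PowerSeries.mk (fun n => ν j ^ n)) (mem_univ i)]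
        ring
    _ = PowerSeries.C ((1 - c) * ν i *
        ∏ j ∈ univ.erase i, (ν i - c * ν j) / (ν i - ν j)) * PowerSeries.X *
        PowerSeries.mk (fun n => ν i ^ n) := by
        rw [← Finset.prod_mul_distrib, Finset.prod_congr rfl fun j _ => geom_inv (ν j),
          Finset.prod_const_one, mul_one]

lemma coeff_prod_form_zero (m : ℕ) (ν : Fin m → ℂ) (hν : Function.Injective ν) (c : ℂ) :
    PowerSeries.coeff 0 ((∏ j, (1 - PowerSeries.C (c * ν j) * PowerSeries.X)) *
      (∏ j, PowerSeries.mk (fun n => ν j ^ n))) = 1 := by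
  rw [prod_form m ν hν c]
  simp [mul_assoc]

lemma coeff_prod_form_succ (m : ℕ) (ν : Fin m → ℂ) (hν : Function.Injective ν) (c : ℂ)
    (k : ℕ) :
    PowerSeries.coeff (k + 1) ((∏ j, (1 - PowerSeries.C (c * ν j) * PowerSeries.X)) *
      (∏ j, PowerSeries.mk (fun n => ν j ^ n))) =
    ∑ i, (1 - c) * ν i * (∏ j ∈ univ.erase i, (ν i - c * ν j) / (ν i - ν j)) * ν i ^ k := by
  rw [prod_form m ν hν c]
  simp only [map_add, map_sum, PowerSeries.coeff_one, Nat.succ_ne_zero, if_false, mul_assoc,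
    PowerSeries.coeff_C_mul, PowerSeries.coeff_succ_X_mul, PowerSeries.coeff_mk, zero_add]

end Aux

/-- the spectral power sums satisfy
`pₙ(μ) = tₙ(μ) + ω Σ_{k=1}^{n−1} p_{n−k}(μ) t_k(μ)` for all `n ≥ 1`. -/
theorem stmt_8 (q : ℂ) (hq : q ≠ 0) (hq2 : q ^ 2 ≠ 1) (ω : ℂ) (hω : ω = q - q⁻¹)
    (m : ℕ) (hm : 1 ≤ m) (μ : Fin m → ℂ) (hμ : Function.Injective μ)
    (p t : ℕ → ℂ)
    (hp : ∀ n : ℕ, p n = ∑ i, μ i ^ n *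
      (q⁻¹ * ∏ j ∈ univ.erase i, (μ i - q⁻¹ ^ 2 * μ j) / (μ i - μ j)))
    (ht : ∀ n : ℕ, t n = ∑ i, (q⁻¹ ^ 2 * μ i) ^ n *
      (q * ∏ j ∈ univ.erase i, (μ i - q ^ 2 * μ j) / (μ i - μ j))) :
    ∀ n : ℕ, 1 ≤ n →
      p n = t n + ω * ∑ k ∈ Icc 1 (n - 1), p (n - k) * t k := by
  have hqinv : q⁻¹ ≠ 0 := inv_ne_zero hq
  have hq2inv : q⁻¹ ^ 2 ≠ 0 := pow_ne_zero _ hqinv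
  have hqq : q * q⁻¹ = 1 := mul_inv_cancel₀ hq
  have hω0 : ω ≠ 0 := by
    rw [hω]
    intro h
    apply hq2
    have hh : q = q⁻¹ := sub_eq_zero.mp h
    calc q ^ 2 = q * q := sq q
      _ = q * q⁻¹ := by rw [← hh]
      _ = 1 := hqq
  set ν : Fin m → ℂ := fun i => q⁻¹ ^ 2 * μ i with hνdef
  have hν : Function.Injective ν := fun i j h => hμ (mul_left_cancel₀ hq2inv h)
  set F : PowerSeries ℂ := (∏ j, (1 - PowerSeries.C (q⁻¹ ^ 2 * μ j) * PowerSeries.X)) *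
    (∏ j, PowerSeries.mk (fun n => μ j ^ n)) with hFdef
  set G : PowerSeries ℂ := (∏ j, (1 - PowerSeries.C (q ^ 2 * ν j) * PowerSeries.X)) *
    (∏ j, PowerSeries.mk (fun n => ν j ^ n)) with hGdef
  have hG1 : (∏ j, (1 - PowerSeries.C (q ^ 2 * ν j) * PowerSeries.X)) =
      ∏ j, (1 - PowerSeries.C (μ j) * PowerSeries.X) := by
    refine Finset.prod_congr rfl fun j _ => ?_
    have : q ^ 2 * ν j = μ j := by
      rw [hνdef]
      calc q ^ 2 * (q⁻¹ ^ 2 * μ j) = (q * q⁻¹) ^ 2 * μ j := by ring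
        _ = μ j := by rw [hqq, one_pow, one_mul]
    rw [this]
  have hFG : F * G = 1 := by
    rw [hFdef, hGdef, hG1]
    calc (∏ j, (1 - PowerSeries.C (q⁻¹ ^ 2 * μ j) * PowerSeries.X)) *
        (∏ j, PowerSeries.mk (fun n => μ j ^ n)) *
        ((∏ j, (1 - PowerSeries.C (μ j) * PowerSeries.X)) *
          (∏ j, PowerSeries.mk (fun n => ν j ^ n)))
        = ((∏ j, (1 - PowerSeries.C (μ j) * PowerSeries.X)) *
            (∏ j, PowerSeries.mk (fun n => μ j ^ n))) *
          ((∏ j, (1 - PowerSeries.C (ν j) * PowerSeries.X)) *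
            (∏ j, PowerSeries.mk (fun n => ν j ^ n))) := by
          rw [hνdef]
          ring
      _ = 1 := by rw [prod_geom_inv, prod_geom_inv, one_mul]
  have hFc0 : PowerSeries.coeff 0 F = 1 := coeff_prod_form_zero m μ hμ (q⁻¹ ^ 2)
  have hGc0 : PowerSeries.coeff 0 G = 1 := coeff_prod_form_zero m ν hν (q ^ 2)
  have hωq : (1 : ℂ) - q⁻¹ ^ 2 = ω * q⁻¹ := by
    rw [hω]
    linear_combination -hqq
  have h1q2 : (1 : ℂ) - q ^ 2 = -(ω * q) := by
    rw [hω]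
    linear_combination -hqq
  have hFcs : ∀ k : ℕ, PowerSeries.coeff (k + 1) F = ω * p (k + 1) := by
    intro k
    rw [hFdef, coeff_prod_form_succ m μ hμ (q⁻¹ ^ 2) k, hp (k + 1), Finset.mul_sum]
    refine Finset.sum_congr rfl fun i _ => ?_
    rw [hωq]
    ring
  have hGcs : ∀ k : ℕ, PowerSeries.coeff (k + 1) G = -(ω * t (k + 1)) := by
    intro k
    rw [hGdef, coeff_prod_form_succ m ν hν (q ^ 2) k, ht (k + 1)]
    rw [show -(ω * ∑ i, (q⁻¹ ^ 2 * μ i) ^ (k + 1) *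
        (q * ∏ j ∈ univ.erase i, (μ i - q ^ 2 * μ j) / (μ i - μ j))) =
      ∑ i, -(ω * ((q⁻¹ ^ 2 * μ i) ^ (k + 1) *
        (q * ∏ j ∈ univ.erase i, (μ i - q ^ 2 * μ j) / (μ i - μ j)))) from by
        rw [Finset.mul_sum, Finset.sum_neg_distrib]]
    refine Finset.sum_congr rfl fun i _ => ?_
    have hquot : (∏ j ∈ univ.erase i, (ν i - q ^ 2 * ν j) / (ν i - ν j)) =
        ∏ j ∈ univ.erase i, (μ i - q ^ 2 * μ j) / (μ i - μ j) := by
      refine Finset.prod_congr rfl fun j _ => ?_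
      rw [hνdef]
      have h1 : q⁻¹ ^ 2 * μ i - q ^ 2 * (q⁻¹ ^ 2 * μ j) = q⁻¹ ^ 2 * (μ i - q ^ 2 * μ j) := by
        ring
      have h2 : q⁻¹ ^ 2 * μ i - q⁻¹ ^ 2 * μ j = q⁻¹ ^ 2 * (μ i - μ j) := by ring
      rw [h1, h2, mul_div_mul_left _ _ hq2inv]
    rw [hquot]
    have hνi : ν i = q⁻¹ ^ 2 * μ i := rfl
    rw [hνi, h1q2]
    ring
  -- now the convolution
  intro n hn
  obtain ⟨N, rfl⟩ : ∃ N, n = N + 1 := ⟨n - 1, (Nat.succ_pred_eq_of_pos hn).symm⟩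
  have h0 := congrArg (PowerSeries.coeff (N + 1)) hFG
  rw [PowerSeries.coeff_mul, Finset.Nat.sum_antidiagonal_eq_sum_range_succ_mk,
    Finset.sum_range_succ, Finset.sum_range_succ', PowerSeries.coeff_one] at h0
  simp only [Nat.sub_zero, Nat.sub_self, Nat.succ_ne_zero, if_false] at h0
  rw [hFc0, hGc0, hFcs N, hGcs N, one_mul, mul_one] at h0
  have hsum : (∑ i ∈ Finset.range N,
      PowerSeries.coeff (i + 1) F * PowerSeries.coeff (N + 1 - (i + 1)) G) =
      -(ω * ω * ∑ i ∈ Finset.range N, p (i + 1) * t (N - i)) := by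
    rw [Finset.mul_sum, ← Finset.sum_neg_distrib]
    refine Finset.sum_congr rfl fun i hi => ?_
    have hi' : i < N := Finset.mem_range.mp hi
    rw [show N + 1 - (i + 1) = (N - i - 1) + 1 from by omega, hFcs i, hGcs (N - i - 1),
      show N - i - 1 + 1 = N - i from by omega]
    ring
  rw [hsum] at h0
  have hicc : (∑ k ∈ Icc 1 (N + 1 - 1), p (N + 1 - k) * t k) =
      ∑ i ∈ Finset.range N, p (i + 1) * t (N - i) := by
    rw [show N + 1 - 1 = N from rfl, ← Finset.Ico_add_one_right_eq_Icc, Finset.sum_Ico_eq_sum_range]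
    rw [← Finset.sum_range_reflect (fun i => p (i + 1) * t (N - i)) N]
    refine Finset.sum_congr (by rw [Nat.add_sub_cancel]) fun j hj => ?_
    have hj' : j < N := Finset.mem_range.mp (by simpa using hj)
    rw [show N - 1 - j + 1 = N - j from by omega, show N - (N - 1 - j) = j + 1 from by omega,
      show N + 1 - (1 + j) = N - j from by omega, show 1 + j = j + 1 from by omega]
  rw [hicc]
  apply mul_left_cancel₀ hω0
  linear_combination h0
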